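/- Let F be a free group and let u ∈ F be nontrivial. For every natural number m there exists a natural number n that is a multiple of m and a homomorphism φ of F onto a finite group such that the order of φ(u) is exactly n. (In particular, for every N there is a finite quotient in which the image of u has order greater than N.) -/

import Mathlib

namespace Stmt18Aux

open FreeGroup

variable {α : Type}

/-- non-cancelling pair -/
def noC (p q : α × Bool) : Prop := p.1 = q.1 → p.2 = q.2

lemma noC_iff (p q : α × Bool) : ¬ noC p q ↔ (q = (p.1, !p.2)) := by
  obtain ⟨a, b⟩ := p; obtain ⟨c, d⟩ := q
  simp only [noC]
  constructor
  · intro h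
    push_neg at h
    obtain ⟨h1, h2⟩ := h
    simp only [Prod.mk.injEq]
    cases b <;> cases d <;> simp_all
  · rintro h
    simp only [Prod.mk.injEq] at h
    obtain ⟨h1, h2⟩ := h
    intro _
    cases b <;> simp_all


lemma exists_perm_extend {X : Type} [Finite X] (f : X → X) (s : Set X)
    (h : Set.InjOn f s) : ∃ σ : Equiv.Perm X, ∀ x ∈ s, σ x = f x := by
  classical
  cases nonempty_fintype X
  have hbij : Set.BijOn f s (f '' s) := h.bijOn_image
  let e1 : s ≃ (f '' s) := hbij.equiv f
  have hcard : Fintype.card (↥sᶜ) = Fintype.card (↥(f '' s)ᶜ) := by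
    have h1 : Fintype.card s = Fintype.card (f '' s) := Fintype.card_congr e1
    have h2 : Fintype.card (↥sᶜ) = Fintype.card X - Fintype.card s :=
      Fintype.card_compl_set s
    have h3 : Fintype.card (↥(f '' s)ᶜ) = Fintype.card X - Fintype.card (f '' s) :=
      Fintype.card_compl_set _
    have h4 : Fintype.card s ≤ Fintype.card X :=
      Fintype.card_le_of_injective Subtype.val Subtype.val_injective
    omega
  let e2 : (↥sᶜ) ≃ (↥(f '' s)ᶜ) := Fintype.equivOfCardEq hcard
  refine ⟨(Equiv.Set.sumCompl s).symm.trans ((e1.sumCongr e2).trans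
    (Equiv.Set.sumCompl (f '' s))), ?_⟩
  intro x hx
  simp only [Equiv.trans_apply]
  rw [Equiv.Set.sumCompl_symm_apply_of_mem hx]
  simp only [Equiv.sumCongr_apply, Sum.map_inl]
  rw [Equiv.Set.sumCompl_apply_inl]
  rfl

section DecEq
variable [DecidableEq α]

lemma good_of_reduced (l : List (α × Bool)) (h : reduce l = l) :
    ∀ i, (h1 : i + 1 < l.length) → noC (l.get ⟨i, by omega⟩) (l.get ⟨i+1, h1⟩) := by
  intro i h1
  by_contra hc
  rw [noC_iff] at hc
  set p := l.get ⟨i, by omega⟩ with hp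
  have hdecomp : l = l.take i ++ p :: (p.1, !p.2) :: l.drop (i+2) := by
    conv_lhs => rw [← List.take_append_drop i l]
    congr 1
    rw [List.drop_eq_getElem_cons (by omega : i < l.length)]
    congr 1
    rw [List.drop_eq_getElem_cons (h1)]
    rw [← hc]
    rfl
  exact reduce.not (by rw [h]; exact hdecomp)

lemma reduced_of_good (l : List (α × Bool))
    (h : ∀ i, (h1 : i + 1 < l.length) → noC (l.get ⟨i, by omega⟩) (l.get ⟨i+1, h1⟩)) :
    reduce l = l := by
  induction l with
  | nil => rfl
  | cons x t ih =>
    have ht : reduce t = t := by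
      apply ih
      intro i h1
      exact h (i+1) (by simpa using Nat.succ_lt_succ h1)
    rw [reduce.cons, ht]
    cases t with
    | nil => rfl
    | cons y ys =>
      have h0 := h 0 (by simp)
      simp only [List.get] at h0
      have hn : ¬ (x.1 = y.1 ∧ x.2 = !y.2) := by
        rintro ⟨h1, h2⟩
        have := h0 h1
        rw [this] at h2
        simp at h2
      simp [hn]

/-- Cyclic reduction: every nontrivial element is conjugate to a nontrivial element whose
reduced word is cyclically reduced. -/
lemma exists_cyclically_reduced (u : FreeGroup α) (hu : u ≠ 1) :
    ∃ (c v : FreeGroup α), u = c * v * c⁻¹ ∧ v ≠ 1 ∧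
      ∀ x y : α × Bool, v.toWord.getLast? = some x → v.toWord.head? = some y → noC x y := by
  generalize hn : u.toWord.length = n
  induction n using Nat.strong_induction_on generalizing u with
  | _ n ih =>
  by_cases hcyc : ∀ x y : α × Bool, u.toWord.getLast? = some x → u.toWord.head? = some y → noC x y
  · exact ⟨1, u, by group, hu, hcyc⟩
  push_neg at hcyc
  obtain ⟨x, y, hlast, hhead, hnot⟩ := hcyc
  rw [noC_iff] at hnot
  have hne : u.toWord ≠ [] := by
    simpa [Ne, toWord_eq_nil_iff] using hu
  have hne0 : 0 < u.toWord.length := List.length_pos_iff.mpr hne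
  have hL1 : u.toWord.length ≠ 1 := by
    intro h
    obtain ⟨a, ha⟩ := List.length_eq_one_iff.mp h
    rw [ha] at hlast hhead
    simp only [List.getLast?_singleton, List.head?_cons, Option.some_inj] at hlast hhead
    rw [← hlast, ← hhead] at hnot
    have := congrArg Prod.snd hnot
    simp at this
  have hlen2 : 2 ≤ u.toWord.length := by omega
  have htne : u.toWord.tail ≠ [] := by
    intro h
    have := congrArg List.length h
    simp [List.length_tail] at this
    omega
  set mid := u.toWord.tail.dropLast with hmid
  have h1 : u.toWord = y :: u.toWord.tail := by
    rcases hu' : u.toWord with _ | ⟨a, t⟩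
    · exact absurd hu' hne
    · rw [hu'] at hhead
      simp only [List.head?_cons, Option.some_inj] at hhead
      simp [hhead]
  have h3 : u.toWord.tail.getLast? = some x := by
    rw [h1] at hlast
    rcases ht' : u.toWord.tail with _ | ⟨a, t⟩
    · exact absurd ht' htne
    · rw [ht'] at hlast
      rwa [List.getLast?_cons_cons] at hlast
  have h2 : u.toWord.tail.getLast htne = x := by
    rwa [List.getLast?_eq_some_getLast htne, Option.some_inj] at h3
  have hdecomp : u.toWord = y :: (mid ++ [x]) := by
    conv_lhs => rw [h1]
    rw [hmid]
    congr 1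
    rw [← h2]
    exact (List.dropLast_append_getLast htne).symm
  have hredl : reduce u.toWord = u.toWord := reduce_toWord u
  have hchain : u.toWord.Chain' noC := by
    unfold List.Chain'
    rw [List.isChain_iff_getElem]
    intro i h
    exact good_of_reduced _ hredl i (by omega)
  have hmidchain : mid.Chain' noC := by
    refine hchain.infix ?_
    exact ((List.dropLast_prefix _).isInfix).trans (List.tail_suffix _).isInfix
  have hmidred : reduce mid = mid := by
    apply reduced_of_good
    intro i h1
    have := List.isChain_iff_getElem.mp hmidchain i (by omega)
    exact this
  set v0 := mk mid with hv0
  have hv0word : v0.toWord = mid := by rw [hv0, toWord_mk, hmidred]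
  have hxy : mk [x] = (mk [y])⁻¹ := by
    rw [inv_mk]
    congr 1
    rw [hnot]
    simp [invRev]
  have hu_decomp : u = mk [y] * v0 * (mk [y])⁻¹ := by
    conv_lhs => rw [← mk_toWord (x := u), hdecomp]
    rw [← hxy, hv0, mul_mk, mul_mk]
    simp
  have hv0ne : v0 ≠ 1 := by
    intro h
    rw [h, mul_one, mul_inv_cancel] at hu_decomp
    exact hu hu_decomp
  have hmidlen : v0.toWord.length < n := by
    rw [hv0word]
    have := congrArg List.length hdecomp
    simp at this
    omega
  obtain ⟨c, v, hv1, hv2, hv3⟩ := ih _ hmidlen v0 hv0ne rfl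
  exact ⟨mk [y] * c, v, by rw [hu_decomp, hv1]; group, hv2, hv3⟩


/-- The core construction: for a cyclically reduced nonempty word (given reversed as `r`),
there is a homomorphism to a finite permutation group where the image of the word
has order divisible by `m`. -/
lemma main_construction (r : List (α × Bool)) (hL : 0 < r.length) (m : ℕ) (hm : 1 ≤ m)
    (hr : ∀ k, (hk : k < r.length) →
      noC (r.get ⟨(k+1) % r.length, Nat.mod_lt _ hL⟩) (r.get ⟨k, hk⟩)) :
    ∃ φ : FreeGroup α →* Equiv.Perm (ZMod (m * r.length)),
      m ∣ orderOf (φ (mk r.reverse)) := by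
  classical
  set L := r.length with hLdef
  haveI : NeZero (m * L) := ⟨by positivity⟩
  set π : ZMod (m * L) →+* ZMod L := ZMod.castHom (dvd_mul_left L m) (ZMod L) with hπ
  set P : α → Set (ZMod L) :=
    fun a => {c | ∃ k : Fin L, c = ((k : ℕ) : ZMod L) ∧ r.get k = (a, true)} with hP
  set M : α → Set (ZMod L) :=
    fun a => {c | ∃ k : Fin L, c = ((k : ℕ) : ZMod L) + 1 ∧ r.get k = (a, false)} with hM
  -- helper: convert ZMod L equalities of naturals
  have hmod2 : ∀ (i j : ℕ), i < L → ((i : ZMod L) = (j : ZMod L)) → i = j % L := by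
    intro i j hi h
    have h2 : i % L = j % L := (ZMod.natCast_eq_natCast_iff i j L).mp h
    rwa [Nat.mod_eq_of_lt hi] at h2
  -- disjointness of P and M
  have hPM : ∀ a c, c ∈ P a → c ∈ M a → False := by
    intro a c hc1 hc2
    obtain ⟨k1, hk1, hg1⟩ := hc1
    obtain ⟨k2, hk2, hg2⟩ := hc2
    have heq : ((k1 : ℕ) : ZMod L) = ((((k2 : ℕ) + 1) : ℕ) : ZMod L) := by
      rw [hk1] at hk2
      rw [hk2]; push_cast; ring
    have hval : (k1 : ℕ) = ((k2 : ℕ) + 1) % L := hmod2 _ _ k1.isLt heq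
    have hfin : (⟨((k2 : ℕ) + 1) % L, Nat.mod_lt _ hL⟩ : Fin L) = k1 := by
      apply Fin.ext; simp [hval]
    have := hr (k2 : ℕ) k2.isLt
    rw [Fin.eta] at this
    rw [hfin, hg1, hg2] at this
    exact absurd (this rfl) (by simp)
  -- the cross condition for injectivity
  have hCross : ∀ a (c d : ZMod L), c ∈ P a → d ∈ M a → c + 1 ≠ d - 1 := by
    intro a c d hc hd heq
    obtain ⟨k1, hk1, hg1⟩ := hc
    obtain ⟨k2, hk2, hg2⟩ := hd
    have heq2 : (((k2 : ℕ) : ℕ) : ZMod L) = ((((k1 : ℕ) + 1) : ℕ) : ZMod L) := by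
      rw [hk1, hk2] at heq
      have h5 : ((k2 : ℕ) : ZMod L) = ((k1 : ℕ) : ZMod L) + 1 := by
        linear_combination -heq
      rw [h5]; push_cast; ring
    have hval : (k2 : ℕ) = ((k1 : ℕ) + 1) % L := hmod2 _ _ k2.isLt heq2
    have hfin : (⟨((k1 : ℕ) + 1) % L, Nat.mod_lt _ hL⟩ : Fin L) = k2 := by
      apply Fin.ext; simp [hval]
    have := hr (k1 : ℕ) k1.isLt
    rw [Fin.eta] at this
    rw [hfin, hg1, hg2] at this
    exact absurd (this rfl) (by simp)
  -- the partial maps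
  set f : α → ZMod (m * L) → ZMod (m * L) :=
    fun a p => if π p ∈ P a then p + 1 else if π p ∈ M a then p - 1 else p with hf
  set s : α → Set (ZMod (m * L)) := fun a => {p | π p ∈ P a ∨ π p ∈ M a} with hs
  have fval1 : ∀ a p, π p ∈ P a → f a p = p + 1 := by
    intro a p h; rw [hf]; simp only [if_pos h]
  have fval2 : ∀ a p, π p ∈ M a → f a p = p - 1 := by
    intro a p h
    have hnp : π p ∉ P a := fun h' => hPM a _ h' h
    rw [hf]; simp only [if_neg hnp, if_pos h]
  have hinj : ∀ a, Set.InjOn (f a) (s a) := by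
    intro a p hp q hq heq
    rcases hp with hp | hp <;> rcases hq with hq | hq
    · rw [fval1 a p hp, fval1 a q hq] at heq
      exact add_right_cancel heq
    · rw [fval1 a p hp, fval2 a q hq] at heq
      exact absurd (by simpa only [_root_.map_add, _root_.map_sub, _root_.map_one] using congrArg π heq)
        (hCross a (π p) (π q) hp hq)
    · rw [fval2 a p hp, fval1 a q hq] at heq
      exact absurd (by simpa only [_root_.map_add, _root_.map_sub, _root_.map_one] using congrArg π heq.symm)
        (hCross a (π q) (π p) hq hp)
    · rw [fval2 a p hp, fval2 a q hq] at heq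
      exact sub_left_inj.mp heq
  -- extend to permutations
  have hext : ∀ a, ∃ σ : Equiv.Perm (ZMod (m * L)), ∀ p ∈ s a, σ p = f a p :=
    fun a => exists_perm_extend (f a) (s a) (hinj a)
  choose σ hσ using hext
  set φ : FreeGroup α →* Equiv.Perm (ZMod (m * L)) := FreeGroup.lift σ with hφ
  refine ⟨φ, ?_⟩
  have φ_pos : ∀ a, φ (mk [(a, true)]) = σ a := fun a => FreeGroup.lift_apply_of
  have φ_neg : ∀ a, φ (mk [(a, false)]) = (σ a)⁻¹ := by
    intro a
    have h1 : (mk [(a, true)] : FreeGroup α)⁻¹ = mk [(a, false)] := by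
      rw [inv_mk]; simp [invRev]
    rw [← h1, _root_.map_inv, φ_pos]
  -- the key induction
  have key : ∀ k, k ≤ L → ∀ p : ZMod (m * L), π p = 0 →
      φ (mk (r.take k).reverse) p = p + ((k : ℕ) : ZMod (m * L)) := by
    intro k
    induction k with
    | zero =>
      intro _ p _
      simp only [List.take_zero, List.reverse_nil, ← one_eq_mk, _root_.map_one,
        Equiv.Perm.coe_one, id_eq, Nat.cast_zero, add_zero]
    | succ k ih =>
      intro hk1 p hp
      have hkL : k < L := by omega
      have htake : r.take (k + 1) = r.take k ++ [r.get ⟨k, hkL⟩] := by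
        rw [List.take_succ]
        congr 1
        rw [List.getElem?_eq_getElem hkL]
        rfl
      rw [htake, List.reverse_append, List.reverse_singleton, List.singleton_append,
        ← List.singleton_append, ← mul_mk, _root_.map_mul]
      have hπpk : π (p + ((k : ℕ) : ZMod (m * L))) = ((k : ℕ) : ZMod L) := by
        rw [_root_.map_add, hp, zero_add, map_natCast]
      rcases hget : r.get ⟨k, hkL⟩ with ⟨a, b⟩
      cases b
      · -- negative letter
        simp only [Equiv.Perm.coe_mul, Function.comp_apply]
        rw [ih (by omega) p hp, φ_neg]
        rw [Equiv.Perm.inv_eq_iff_eq]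
        have hmem : π (p + (((k + 1) : ℕ) : ZMod (m * L))) ∈ M a := by
          rw [_root_.map_add, hp, zero_add, map_natCast]
          exact ⟨⟨k, hkL⟩, by push_cast; ring, hget⟩
        rw [hσ a _ (Or.inr hmem), fval2 a _ hmem]
        push_cast
        ring
      · -- positive letter
        simp only [Equiv.Perm.coe_mul, Function.comp_apply]
        rw [ih (by omega) p hp, φ_pos]
        have hmem : π (p + ((k : ℕ) : ZMod (m * L))) ∈ P a := by
          rw [hπpk]
          exact ⟨⟨k, hkL⟩, rfl, hget⟩
        rw [hσ a _ (Or.inl hmem), fval1 a _ hmem]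
        push_cast
        ring
  -- the orbit computation
  have orbit : ∀ t : ℕ, ((φ (mk r.reverse)) ^ t) 0 = ((t * L : ℕ) : ZMod (m * L)) := by
    intro t
    induction t with
    | zero => simp
    | succ t ih =>
      rw [pow_succ', Equiv.Perm.coe_mul, Function.comp_apply, ih]
      have h0 : π ((t * L : ℕ) : ZMod (m * L)) = 0 := by
        rw [map_natCast]
        exact (ZMod.natCast_eq_zero_iff (t * L) L).mpr ⟨t, mul_comm t L⟩
      have htl : r.take L = r := List.take_length
      have := key L le_rfl ((t * L : ℕ) : ZMod (m * L)) h0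
      rw [htl] at this
      rw [this]
      push_cast
      ring
  -- conclude
  have hd := pow_orderOf_eq_one (φ (mk r.reverse))
  have h0 : ((orderOf (φ (mk r.reverse)) * L : ℕ) : ZMod (m * L)) = 0 := by
    rw [← orbit, hd]
    simp
  have hdvd : m * L ∣ orderOf (φ (mk r.reverse)) * L :=
    (ZMod.natCast_eq_zero_iff _ (m * L)).mp h0
  exact (Nat.mul_dvd_mul_iff_right hL).mp hdvd

end DecEq
end Stmt18Aux

open Stmt18Aux FreeGroup in
theorem stmt18 {α : Type} (u : FreeGroup α) (hu : u ≠ 1) (m : ℕ) (hm : 1 ≤ m) :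
    ∃ n : ℕ, m ∣ n ∧ 0 < n ∧
      ∃ (Q : Type) (_ : Group Q) (_ : Finite Q) (φ : FreeGroup α →* Q),
        Function.Surjective φ ∧ orderOf (φ u) = n := by
  classical
  obtain ⟨c, v, hcv, hvne, hv3⟩ := exists_cyclically_reduced u hu
  set w := v.toWord with hw
  have hwne : w ≠ [] := by simpa [hw, Ne, toWord_eq_nil_iff] using hvne
  have hLw : 0 < w.length := List.length_pos_iff.mpr hwne
  set r := w.reverse with hrdef
  have hLen : r.length = w.length := List.length_reverse
  have hLr : 0 < r.length := by omega
  have hgr : ∀ (k : ℕ) (hk : k < r.length),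
      r.get ⟨k, hk⟩ = w.get ⟨w.length - 1 - k, by omega⟩ := by
    intro k hk
    simp only [hrdef, List.get_eq_getElem, List.getElem_reverse]
  have hred : reduce w = w := reduce_toWord v
  have hr : ∀ k, (hk : k < r.length) →
      noC (r.get ⟨(k+1) % r.length, Nat.mod_lt _ hLr⟩) (r.get ⟨k, hk⟩) := by
    intro k hk
    by_cases hk2 : k + 1 < r.length
    · have hmod : (k+1) % r.length = k + 1 := Nat.mod_eq_of_lt hk2
      simp only [hmod]
      rw [hgr (k+1) hk2, hgr k hk]
      have hgood := good_of_reduced w hred (w.length - 1 - (k+1)) (by omega)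
      convert hgood using 2 <;> exact Fin.ext (by simp only; omega)
    · have hmod : (k+1) % r.length = 0 := by
        have : k + 1 = r.length := by omega
        rw [this, Nat.mod_self]
      simp only [hmod]
      rw [hgr 0 (by omega), hgr k hk]
      have hgeq : ∀ (i j : ℕ) (hi : i < w.length) (hj : j < w.length), i = j →
          w.get ⟨i, hi⟩ = w.get ⟨j, hj⟩ := by
        intro i j hi hj h
        subst h
        rfl
      have hhead0 : w.head? = some (w.get ⟨0, hLw⟩) := by
        rw [List.head?_eq_head hwne]
        simp [List.get_eq_getElem, List.head_eq_getElem]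
      have hlastL : w.getLast? = some (w.get ⟨w.length - 1, by omega⟩) := by
        rw [List.getLast?_eq_some_getLast hwne, Option.some_inj, List.getLast_eq_getElem]; rfl
      apply hv3
      · rw [hlastL]
        exact congrArg some (hgeq _ _ _ _ (by omega))
      · rw [hhead0]
        exact congrArg some (hgeq _ _ _ _ (by omega))
  obtain ⟨φ, hφ⟩ := main_construction r hLr m hm hr
  have hrr : mk r.reverse = v := by
    rw [hrdef, List.reverse_reverse, hw, mk_toWord]
  rw [hrr] at hφ
  -- conjugation preserves order
  have hconj : φ u = (MulAut.conj (φ c)) (φ v) := by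
    rw [hcv]
    simp [MulAut.conj, _root_.map_mul, _root_.map_inv]
  have horder : orderOf (φ u) = orderOf (φ v) := by
    rw [hconj, MulEquiv.orderOf_eq]
  haveI : NeZero (m * r.length) := ⟨by positivity⟩
  have hpos : 0 < orderOf (φ u) := orderOf_pos (φ u)
  refine ⟨orderOf (φ u), by rw [horder]; exact hφ, hpos,
    ↥φ.range, inferInstance, inferInstance, φ.rangeRestrict,
    MonoidHom.rangeRestrict_surjective φ, ?_⟩
  have hsub : φ.range.subtype (φ.rangeRestrict u) = φ u := rfl
  calc orderOf (φ.rangeRestrict u)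
      = orderOf (φ.range.subtype (φ.rangeRestrict u)) :=
        (orderOf_injective _ (Subgroup.subtype_injective _) _).symm
    _ = orderOf (φ u) := by rw [hsub]
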